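/- For every integer n ≥ 0, the number of UH-free Schröder paths of length 2n having no horizontal step of height greater than 1 equals (1/2)·(1 + ∑_{i=0}^{n} C(2i, i)). -/

import Mathlib

/-- Steps of a Schröder path: `U = (1,1)`, `D = (1,-1)`, `H = H² = (2,0)`. -/
inductive SStep : Type
  | U : SStep
  | D : SStep
  | H : SStep
  deriving DecidableEq

/-- The contribution of a step to the x-coordinate. -/
def SStep.len : SStep → ℕ
  | U => 1
  | D => 1
  | H => 2

/-- The contribution of a step to the y-coordinate. -/
def SStep.eff : SStep → ℤ
  | U => 1
  | D => -1
  | H => 0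

/-- The height (y-coordinate of the starting point) of the `i`-th step (0-indexed);
for `i = L.length` this is the final height of the path. -/
def sHeight (L : List SStep) (i : ℕ) : ℤ := ((L.take i).map SStep.eff).sum

/-- `L` is a Schröder path of length `2 * n`: it has total horizontal displacement `2 * n`,
ends at height `0`, and never goes below the x-axis. -/
def IsSchroder (L : List SStep) (n : ℕ) : Prop :=
  (L.map SStep.len).sum = 2 * n ∧ (L.map SStep.eff).sum = 0 ∧ ∀ i, 0 ≤ sHeight L i

/-- A peak at position `i`: an up step immediately followed by a down step.
The height of this peak is `sHeight L (i+1)`, the height of its down step. -/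
def IsPeakAt (L : List SStep) (i : ℕ) : Prop :=
  L[i]? = some SStep.U ∧ L[i+1]? = some SStep.D

/-- `L` has no peak of odd height. -/
def NoOddPeak (L : List SStep) : Prop :=
  ∀ i, IsPeakAt L i → ¬ Odd (sHeight L (i+1))

/-- `L` has no peak of even height. -/
def NoEvenPeak (L : List SStep) : Prop :=
  ∀ i, IsPeakAt L i → ¬ Even (sHeight L (i+1))

/-- `L` is UH-free: no up step is immediately followed by a horizontal step. -/
def UHFree (L : List SStep) : Prop :=
  ∀ i, ¬ (L[i]? = some SStep.U ∧ L[i+1]? = some SStep.H)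

/-- The number of peaks of `L` of even height greater than `2`. -/
def evenHighPeaks (L : List SStep) : ℕ :=
  ((Finset.range L.length).filter
    (fun i => L[i]? = some SStep.U ∧ L[i+1]? = some SStep.D ∧
      Even (sHeight L (i+1)) ∧ 2 < sHeight L (i+1))).card

open Finset PowerSeries

def lensum (l : List SStep) : ℕ := (l.map SStep.len).sum

def Ok : ℤ → List SStep → Prop
  | h, [] => h = 0
  | h, .U :: l => l.head? ≠ some .H ∧ Ok (h+1) l
  | h, .D :: l => 1 ≤ h ∧ Ok (h-1) l
  | h, .H :: l => 0 ≤ h ∧ h ≤ 1 ∧ Ok h l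

def Wp : ℤ → List SStep → Prop
  | h, [] => h = 1
  | h, .U :: l => Wp (h+1) l
  | h, .D :: l => 2 ≤ h ∧ Wp (h-1) l
  | h, .H :: l => h = 1 ∧ Wp 1 l

def Dy : ℤ → List SStep → Prop
  | h, [] => h = 0
  | h, .U :: l => Dy (h+1) l
  | h, .D :: l => 1 ≤ h ∧ Dy (h-1) l
  | _, .H :: _ => False

instance instDecOk : ∀ (h : ℤ) (l : List SStep), Decidable (Ok h l)
  | h, [] => by unfold Ok; infer_instance
  | h, .U :: l => by unfold Ok; have := instDecOk (h+1) l; exact inferInstance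
  | h, .D :: l => by unfold Ok; have := instDecOk (h-1) l; exact inferInstance
  | h, .H :: l => by unfold Ok; have := instDecOk h l; exact inferInstance

instance instDecWp : ∀ (h : ℤ) (l : List SStep), Decidable (Wp h l)
  | h, [] => by unfold Wp; infer_instance
  | h, .U :: l => by unfold Wp; have := instDecWp (h+1) l; exact inferInstance
  | h, .D :: l => by unfold Wp; have := instDecWp (h-1) l; exact inferInstance
  | h, .H :: l => by unfold Wp; have := instDecWp 1 l; exact inferInstance

instance instDecDy : ∀ (h : ℤ) (l : List SStep), Decidable (Dy h l)
  | h, [] => by unfold Dy; infer_instance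
  | h, .U :: l => by unfold Dy; have := instDecDy (h+1) l; exact inferInstance
  | h, .D :: l => by unfold Dy; have := instDecDy (h-1) l; exact inferInstance
  | h, .H :: l => by unfold Dy; infer_instance

@[simp] lemma len_U : SStep.U.len = 1 := rfl
@[simp] lemma len_D : SStep.D.len = 1 := rfl
@[simp] lemma len_H : SStep.H.len = 2 := rfl
@[simp] lemma eff_U : SStep.U.eff = 1 := rfl
@[simp] lemma eff_D : SStep.D.eff = -1 := rfl
@[simp] lemma eff_H : SStep.H.eff = 0 := rfl

@[simp] lemma Ok_nil {h : ℤ} : Ok h [] ↔ h = 0 := Iff.rfl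
@[simp] lemma Ok_cons_U {h : ℤ} {l} : Ok h (.U :: l) ↔ (l.head? ≠ some .H ∧ Ok (h+1) l) := Iff.rfl
@[simp] lemma Ok_cons_D {h : ℤ} {l} : Ok h (.D :: l) ↔ (1 ≤ h ∧ Ok (h-1) l) := Iff.rfl
@[simp] lemma Ok_cons_H {h : ℤ} {l} : Ok h (.H :: l) ↔ (0 ≤ h ∧ h ≤ 1 ∧ Ok h l) := Iff.rfl
@[simp] lemma Wp_nil {h : ℤ} : Wp h [] ↔ h = 1 := Iff.rfl
@[simp] lemma Wp_cons_U {h : ℤ} {l} : Wp h (.U :: l) ↔ Wp (h+1) l := Iff.rfl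
@[simp] lemma Wp_cons_D {h : ℤ} {l} : Wp h (.D :: l) ↔ (2 ≤ h ∧ Wp (h-1) l) := Iff.rfl
@[simp] lemma Wp_cons_H {h : ℤ} {l} : Wp h (.H :: l) ↔ (h = 1 ∧ Wp 1 l) := Iff.rfl
@[simp] lemma Dy_nil {h : ℤ} : Dy h [] ↔ h = 0 := Iff.rfl
@[simp] lemma Dy_cons_U {h : ℤ} {l} : Dy h (.U :: l) ↔ Dy (h+1) l := Iff.rfl
@[simp] lemma Dy_cons_D {h : ℤ} {l} : Dy h (.D :: l) ↔ (1 ≤ h ∧ Dy (h-1) l) := Iff.rfl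
@[simp] lemma Dy_cons_H {h : ℤ} {l} : ¬ Dy h (.H :: l) := fun x => x

lemma dy_cast {h h' : ℤ} {l} (e : h = h') : Dy h l → Dy h' l := fun x => e ▸ x
lemma wp_cast {h h' : ℤ} {l} (e : h = h') : Wp h l → Wp h' l := fun x => e ▸ x
lemma ok_cast {h h' : ℤ} {l} (e : h = h') : Ok h l → Ok h' l := fun x => e ▸ x

@[simp] lemma lensum_nil : lensum ([] : List SStep) = 0 := rfl
@[simp] lemma lensum_cons (s : SStep) (l : List SStep) :
    lensum (s :: l) = s.len + lensum l := by simp [lensum]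
@[simp] lemma lensum_append (a b : List SStep) :
    lensum (a ++ b) = lensum a + lensum b := by simp [lensum]

lemma lensum_eq_zero {l : List SStep} (h : lensum l = 0) : l = [] := by
  cases l with
  | nil => rfl
  | cons s t => cases s <;> simp at h

lemma okParity : ∀ (l : List SStep) (h : ℤ), Ok h l → (lensum l : ℤ) % 2 = h % 2 := by
  intro l
  induction l with
  | nil => intro h hk; rw [Ok_nil] at hk; simp [hk]
  | cons s t ih =>
    intro h hk
    cases s
    · have := ih (h+1) hk.2; simp only [lensum_cons, len_U]; push_cast; omega
    · have := ih (h-1) hk.2; simp only [lensum_cons, len_D]; push_cast; omega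
    · have := ih h hk.2.2; simp only [lensum_cons, len_H]; push_cast; omega

lemma wpParity : ∀ (l : List SStep) (h : ℤ), Wp h l → (lensum l : ℤ) % 2 = (h+1) % 2 := by
  intro l
  induction l with
  | nil => intro h hk; rw [Wp_nil] at hk; simp [hk]
  | cons s t ih =>
    intro h hk
    cases s
    · have := ih (h+1) hk; simp only [lensum_cons, len_U]; push_cast; omega
    · have := ih (h-1) hk.2; simp only [lensum_cons, len_D]; push_cast; omega
    · have := ih 1 hk.2; have h1 := hk.1; simp only [lensum_cons, len_H]; push_cast; omega

lemma dyParity : ∀ (l : List SStep) (h : ℤ), Dy h l → (lensum l : ℤ) % 2 = h % 2 := by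
  intro l
  induction l with
  | nil => intro h hk; rw [Dy_nil] at hk; simp [hk]
  | cons s t ih =>
    intro h hk
    cases s
    · have := ih (h+1) hk; simp only [lensum_cons, len_U]; push_cast; omega
    · have := ih (h-1) hk.2; simp only [lensum_cons, len_D]; push_cast; omega
    · exact absurd hk Dy_cons_H

lemma compDy : ∀ (c : List SStep) (h : ℤ) (l : List SStep),
    Dy h c → Dy 0 l → Dy (h+1) (c ++ .D :: l) := by
  intro c
  induction c with
  | nil => intro h l hc hl; rw [Dy_nil] at hc; subst hc; exact ⟨by norm_num, hl⟩
  | cons s t ih =>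
    intro s_h l hc hl
    cases s
    · show Dy (s_h+1+1) (t ++ .D :: l)
      exact dy_cast (by ring) (ih (s_h+1) l hc hl)
    · exact ⟨by linarith [hc.1], dy_cast (by ring) (ih (s_h-1) l hc.2 hl)⟩
    · exact absurd hc Dy_cons_H

lemma compWD : ∀ (c : List SStep) (h : ℤ) (l : List SStep),
    Dy h c → Wp 1 l → Wp (h+2) (c ++ .D :: l) := by
  intro c
  induction c with
  | nil => intro h l hc hl; rw [Dy_nil] at hc; subst hc; exact ⟨by norm_num, hl⟩
  | cons s t ih =>
    intro s_h l hc hl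
    cases s
    · show Wp (s_h+2+1) (t ++ .D :: l)
      exact wp_cast (by ring) (ih (s_h+1) l hc hl)
    · exact ⟨by linarith [hc.1], wp_cast (by ring) (ih (s_h-1) l hc.2 hl)⟩
    · exact absurd hc Dy_cons_H

lemma compOkW : ∀ (e : List SStep) (h : ℤ) (a : List SStep),
    1 ≤ h → Wp h e → Ok 0 a → Ok h (e ++ .D :: a) := by
  intro e
  induction e with
  | nil => intro h a h1 he ha; rw [Wp_nil] at he; subst he; exact ⟨le_refl _, ha⟩
  | cons s t ih =>
    intro h a h1 he ha
    cases s
    · rw [Wp_cons_U] at he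
      refine ⟨?_, ih (h+1) a (by linarith) he ha⟩
      cases t with
      | nil => simp
      | cons x t' =>
        cases x
        · simp
        · simp
        · exfalso; have : h + 1 = 1 := he.1; omega
    · rw [Wp_cons_D] at he
      exact ⟨by linarith [he.1], ih (h-1) a (by linarith [he.1]) he.2 ha⟩
    · rw [Wp_cons_H] at he
      obtain ⟨rfl, hw⟩ := he
      exact ⟨by norm_num, by norm_num, ih 1 a le_rfl hw ha⟩

lemma decDy : ∀ (l : List SStep) (h : ℤ), 0 ≤ h → Dy (h+1) l →
    ∃ c a, l = c ++ .D :: a ∧ Dy h c ∧ Dy 0 a := by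
  intro l
  induction l with
  | nil => intro h h0 hd; rw [Dy_nil] at hd; omega
  | cons s t ih =>
    intro h h0 hd
    cases s
    · rw [Dy_cons_U] at hd
      obtain ⟨c, a, rfl, hc, ha⟩ := ih (h+1) (by linarith) (dy_cast (by ring) hd)
      exact ⟨.U :: c, a, rfl, hc, ha⟩
    · rw [Dy_cons_D] at hd
      rcases eq_or_lt_of_le h0 with h0' | h0'
      · subst h0'
        exact ⟨[], t, rfl, by simp, by simpa using hd.2⟩
      · obtain ⟨c, a, rfl, hc, ha⟩ := ih (h-1) (by omega) (dy_cast (by ring) hd.2)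
        exact ⟨.D :: c, a, rfl, ⟨by omega, hc⟩, ha⟩
    · exact absurd hd Dy_cons_H

lemma decW : ∀ (l : List SStep) (h : ℤ), 0 ≤ h → Wp (h+2) l →
    ∃ c e, l = c ++ .D :: e ∧ Dy h c ∧ Wp 1 e := by
  intro l
  induction l with
  | nil => intro h h0 hd; rw [Wp_nil] at hd; omega
  | cons s t ih =>
    intro h h0 hd
    cases s
    · rw [Wp_cons_U] at hd
      obtain ⟨c, e, rfl, hc, he⟩ := ih (h+1) (by linarith) (wp_cast (by ring) hd)
      exact ⟨.U :: c, e, rfl, hc, he⟩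
    · rw [Wp_cons_D] at hd
      rcases eq_or_lt_of_le h0 with h0' | h0'
      · subst h0'
        exact ⟨[], t, rfl, by simp, by simpa using hd.2⟩
      · obtain ⟨c, e, rfl, hc, he⟩ := ih (h-1) (by omega) (wp_cast (by ring) hd.2)
        exact ⟨.D :: c, e, rfl, ⟨by omega, hc⟩, he⟩
    · rw [Wp_cons_H] at hd; omega

lemma decOk : ∀ (l : List SStep) (h : ℤ), 1 ≤ h → Ok h l →
    ∃ e a, l = e ++ .D :: a ∧ Wp h e ∧ Ok 0 a := by
  intro l
  induction l with
  | nil => intro h h1 hd; rw [Ok_nil] at hd; omega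
  | cons s t ih =>
    intro h h1 hd
    cases s
    · rw [Ok_cons_U] at hd
      obtain ⟨e, a, rfl, he, ha⟩ := ih (h+1) (by linarith) hd.2
      exact ⟨.U :: e, a, rfl, he, ha⟩
    · rw [Ok_cons_D] at hd
      rcases eq_or_lt_of_le h1 with h1' | h1'
      · subst h1'
        exact ⟨[], t, rfl, by simp, by simpa using hd.2⟩
      · obtain ⟨e, a, rfl, he, ha⟩ := ih (h-1) (by omega) hd.2
        exact ⟨.D :: e, a, rfl, ⟨by omega, he⟩, ha⟩
    · rw [Ok_cons_H] at hd
      have h1'' : h = 1 := le_antisymm hd.2.1 h1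
      subst h1''
      obtain ⟨e, a, rfl, he, ha⟩ := ih 1 le_rfl hd.2.2
      exact ⟨.H :: e, a, rfl, ⟨rfl, he⟩, ha⟩

lemma appDy : ∀ (c : List SStep) (h : ℤ) (l : List SStep), Dy h c → Dy h (c ++ l) → Dy 0 l := by
  intro c
  induction c with
  | nil => intro h l hc hl; rw [Dy_nil] at hc; subst hc; simpa using hl
  | cons s t ih =>
    intro h l hc hl
    cases s
    · exact ih (h+1) l hc hl
    · exact ih (h-1) l hc.2 hl.2
    · exact absurd hc Dy_cons_H

lemma appWp : ∀ (c : List SStep) (h : ℤ) (l : List SStep), Wp h c → Wp h (c ++ l) → Wp 1 l := by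
  intro c
  induction c with
  | nil => intro h l hc hl; rw [Wp_nil] at hc; subst hc; simpa using hl
  | cons s t ih =>
    intro h l hc hl
    cases s
    · exact ih (h+1) l hc hl
    · exact ih (h-1) l hc.2 hl.2
    · exact ih 1 l hc.2 hl.2

lemma injDy {h : ℤ} {c₁ c₂ a₁ a₂ : List SStep} (h1 : Dy h c₁) (h2 : Dy h c₂)
    (he : c₁ ++ .D :: a₁ = c₂ ++ .D :: a₂) : c₁ = c₂ ∧ a₁ = a₂ := by
  rcases List.append_eq_append_iff.1 he with ⟨c, hc2, hc⟩ | ⟨c, hc1, hc⟩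
  · cases c with
    | nil => simp at hc hc2; exact ⟨hc2.symm ▸ (by simp), hc⟩
    | cons x t =>
      exfalso
      simp only [List.cons_append, List.cons.injEq] at hc
      obtain ⟨rfl, rfl⟩ := hc
      rw [hc2] at h2
      have := appDy c₁ h (.D :: t) h1 h2
      exact absurd this.1 (by norm_num)
  · cases c with
    | nil => simp at hc hc1; exact ⟨hc1 ▸ (by simp), hc.symm⟩
    | cons x t =>
      exfalso
      simp only [List.cons_append, List.cons.injEq] at hc
      obtain ⟨rfl, rfl⟩ := hc
      rw [hc1] at h1
      have := appDy c₂ h (.D :: t) h2 h1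
      exact absurd this.1 (by norm_num)

lemma injWp {h : ℤ} {c₁ c₂ a₁ a₂ : List SStep} (h1 : Wp h c₁) (h2 : Wp h c₂)
    (he : c₁ ++ .D :: a₁ = c₂ ++ .D :: a₂) : c₁ = c₂ ∧ a₁ = a₂ := by
  rcases List.append_eq_append_iff.1 he with ⟨c, hc2, hc⟩ | ⟨c, hc1, hc⟩
  · cases c with
    | nil => simp at hc hc2; exact ⟨hc2.symm ▸ (by simp), hc⟩
    | cons x t =>
      exfalso
      simp only [List.cons_append, List.cons.injEq] at hc
      obtain ⟨rfl, rfl⟩ := hc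
      rw [hc2] at h2
      have := (appWp c₁ h (.D :: t) h1 h2).1
      omega
  · cases c with
    | nil => simp at hc hc1; exact ⟨hc1 ▸ (by simp), hc.symm⟩
    | cons x t =>
      exfalso
      simp only [List.cons_append, List.cons.injEq] at hc
      obtain ⟨rfl, rfl⟩ := hc
      rw [hc1] at h1
      have := (appWp c₂ h (.D :: t) h2 h1).1
      omega

instance : Fintype SStep :=
  ⟨⟨{SStep.U, SStep.D, SStep.H}, by decide⟩, by intro x; cases x <;> decide⟩

def allLists : ℕ → Finset (List SStep)
  | 0 => {[]}
  | k+1 => {[]} ∪ (Finset.univ ×ˢ allLists k).image fun p => p.1 :: p.2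

lemma mem_allLists : ∀ (k : ℕ) (l : List SStep), l.length ≤ k → l ∈ allLists k := by
  intro k
  induction k with
  | zero => intro l hl; simp at hl; simp [allLists, hl]
  | succ k ih =>
    intro l hl
    cases l with
    | nil => simp [allLists]
    | cons s t =>
      simp only [allLists, Finset.mem_union, Finset.mem_image]
      right
      exact ⟨(s, t), by simp [ih t (by simpa using hl)], rfl⟩

lemma length_le_lensum (l : List SStep) : l.length ≤ lensum l := by
  induction l with
  | nil => simp
  | cons s t ih => cases s <;> simp <;> omega

def AF (n : ℕ) : Finset (List SStep) :=
  (allLists (2*n)).filter fun L => Ok 0 L ∧ lensum L = 2*n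
def WF (n : ℕ) : Finset (List SStep) :=
  (allLists (2*n)).filter fun L => Wp 1 L ∧ lensum L = 2*n
def WSF (n : ℕ) : Finset (List SStep) :=
  (allLists (2*n)).filter fun L => Wp 1 L ∧ L.head? ≠ some .H ∧ lensum L = 2*n
def DF (n : ℕ) : Finset (List SStep) :=
  (allLists (2*n)).filter fun L => Dy 0 L ∧ lensum L = 2*n

lemma mem_AF {n L} : L ∈ AF n ↔ Ok 0 L ∧ lensum L = 2*n := by
  constructor
  · intro h; exact (Finset.mem_filter.1 h).2
  · intro h
    exact Finset.mem_filter.2 ⟨mem_allLists _ _ (h.2 ▸ length_le_lensum L), h⟩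

lemma mem_WF {n L} : L ∈ WF n ↔ Wp 1 L ∧ lensum L = 2*n := by
  constructor
  · intro h; exact (Finset.mem_filter.1 h).2
  · intro h
    exact Finset.mem_filter.2 ⟨mem_allLists _ _ (h.2 ▸ length_le_lensum L), h⟩

lemma mem_WSF {n L} : L ∈ WSF n ↔ Wp 1 L ∧ L.head? ≠ some .H ∧ lensum L = 2*n := by
  constructor
  · intro h; exact (Finset.mem_filter.1 h).2
  · intro h
    exact Finset.mem_filter.2 ⟨mem_allLists _ _ (h.2.2 ▸ length_le_lensum L), h⟩

lemma mem_DF {n L} : L ∈ DF n ↔ Dy 0 L ∧ lensum L = 2*n := by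
  constructor
  · intro h; exact (Finset.mem_filter.1 h).2
  · intro h
    exact Finset.mem_filter.2 ⟨mem_allLists _ _ (h.2 ▸ length_le_lensum L), h⟩

lemma AF_zero : AF 0 = {[]} := by
  ext L
  simp only [mem_AF, Finset.mem_singleton]
  constructor
  · intro h; exact lensum_eq_zero (by omega)
  · rintro rfl; simp

lemma WF_zero : WF 0 = {[]} := by
  ext L
  simp only [mem_WF, Finset.mem_singleton]
  constructor
  · intro h; exact lensum_eq_zero (by omega)
  · rintro rfl; simp

lemma WSF_zero : WSF 0 = {[]} := by
  ext L
  simp only [mem_WSF, Finset.mem_singleton]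
  constructor
  · intro h; exact lensum_eq_zero (by omega)
  · rintro rfl; simp

lemma DF_zero : DF 0 = {[]} := by
  ext L
  simp only [mem_DF, Finset.mem_singleton]
  constructor
  · intro h; exact lensum_eq_zero (by omega)
  · rintro rfl; simp

def glue (p : List SStep × List SStep) : List SStep := .U :: (p.1 ++ .D :: p.2)

lemma card_conv (S T : ℕ → Finset (List SStep)) (n : ℕ)
    (hlen : ∀ j L, L ∈ S j → lensum L = 2*j)
    (hinj : ∀ j₁ j₂ (c₁ c₂ a₁ a₂ : List SStep), c₁ ∈ S j₁ → c₂ ∈ S j₂ →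
      c₁ ++ .D :: a₁ = c₂ ++ .D :: a₂ → c₁ = c₂ ∧ a₁ = a₂) :
    ((Finset.range (n+1)).biUnion fun j => ((S j) ×ˢ (T (n-j))).image glue).card
      = ∑ j ∈ Finset.range (n+1), (S j).card * (T (n-j)).card := by
  rw [Finset.card_biUnion]
  · refine Finset.sum_congr rfl fun j hj => ?_
    rw [Finset.card_image_of_injOn, Finset.card_product]
    rintro ⟨c₁, a₁⟩ h1 ⟨c₂, a₂⟩ h2 he
    simp only [Finset.mem_coe, Finset.mem_product] at h1 h2
    simp only [glue, List.cons.injEq, true_and] at he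
    obtain ⟨rfl, rfl⟩ := hinj j j c₁ c₂ a₁ a₂ h1.1 h2.1 he
    rfl
  · intro i hi j hj hij
    simp only [Finset.disjoint_left]
    intro L hLi hLj
    simp only [Finset.mem_image, Finset.mem_product] at hLi hLj
    obtain ⟨⟨c₁, a₁⟩, ⟨hm1, _⟩, rfl⟩ := hLi
    obtain ⟨⟨c₂, a₂⟩, ⟨hm2, _⟩, he⟩ := hLj
    simp only [glue, List.cons.injEq, true_and] at he
    have h1l := hlen i c₁ hm1
    have h2l := hlen j c₂ hm2
    obtain ⟨rfl, rfl⟩ := hinj j i c₂ c₁ a₂ a₁ hm2 hm1 he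
    exact hij (by omega)

lemma DF_succ_set (n : ℕ) : DF (n+1) =
    (Finset.range (n+1)).biUnion (fun j => ((DF j) ×ˢ (DF (n-j))).image glue) := by
  ext L
  simp only [Finset.mem_biUnion, Finset.mem_image, Finset.mem_range, Finset.mem_product, mem_DF]
  constructor
  · rintro ⟨hd, hl⟩
    cases L with
    | nil => simp at hl
    | cons s t =>
      cases s
      · rw [Dy_cons_U] at hd
        obtain ⟨c, a, rfl, hc, ha⟩ := decDy t 0 le_rfl (dy_cast (by ring) hd)
        have hpar := dyParity c 0 hc
        simp only [lensum_cons, lensum_append, lensum_cons, len_U, len_D] at hl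
        refine ⟨lensum c / 2, by omega, (c, a), ⟨⟨hc, ?_⟩, ⟨ha, ?_⟩⟩, rfl⟩ <;> dsimp only <;> omega
      · exact absurd hd.1 (by norm_num)
      · exact absurd hd Dy_cons_H
  · rintro ⟨j, hj, ⟨c, a⟩, ⟨⟨hc, hcl⟩, ⟨ha, hal⟩⟩, rfl⟩
    dsimp only at hcl hal
    refine ⟨by simpa [glue] using compDy c 0 a hc ha, ?_⟩
    simp only [glue, lensum_cons, lensum_append, lensum_cons, len_U, len_D]
    omega

lemma WSF_succ_set (n : ℕ) : WSF (n+1) =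
    (Finset.range (n+1)).biUnion (fun j => ((DF j) ×ˢ (WF (n-j))).image glue) := by
  ext L
  simp only [Finset.mem_biUnion, Finset.mem_image, Finset.mem_range, Finset.mem_product,
    mem_DF, mem_WF, mem_WSF]
  constructor
  · rintro ⟨hw, hh, hl⟩
    cases L with
    | nil => simp at hl
    | cons s t =>
      cases s
      · rw [Wp_cons_U] at hw
        obtain ⟨c, e, rfl, hc, he⟩ := decW t 0 le_rfl (wp_cast (by ring) hw)
        have hpar := dyParity c 0 hc
        simp only [lensum_cons, lensum_append, lensum_cons, len_U, len_D] at hl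
        refine ⟨lensum c / 2, by omega, (c, e), ⟨⟨hc, ?_⟩, ⟨he, ?_⟩⟩, rfl⟩ <;> dsimp only <;> omega
      · rw [Wp_cons_D] at hw; omega
      · simp at hh
  · rintro ⟨j, hj, ⟨c, e⟩, ⟨⟨hc, hcl⟩, ⟨he, hel⟩⟩, rfl⟩
    dsimp only at hcl hel
    refine ⟨by simpa [glue] using compWD c 0 e hc he, by simp [glue], ?_⟩
    simp only [glue, lensum_cons, lensum_append, lensum_cons, len_U, len_D]
    omega

lemma AF_succ_set (n : ℕ) : AF (n+1) =
    (AF n).image (SStep.H :: ·) ∪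
    (Finset.range (n+1)).biUnion (fun j => ((WSF j) ×ˢ (AF (n-j))).image glue) := by
  ext L
  simp only [Finset.mem_union, Finset.mem_biUnion, Finset.mem_image, Finset.mem_range,
    Finset.mem_product, mem_AF, mem_WSF]
  constructor
  · rintro ⟨ho, hl⟩
    cases L with
    | nil => simp at hl
    | cons s t =>
      cases s
      · rw [Ok_cons_U] at ho
        obtain ⟨hh, ho1⟩ := ho
        obtain ⟨e, a, rfl, he, ha⟩ := decOk t 1 le_rfl ho1
        have hpar := wpParity e 1 he
        have hhe : e.head? ≠ some SStep.H := by
          cases e with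
          | nil => simp
          | cons x t' => simpa using hh
        simp only [lensum_cons, lensum_append, lensum_cons, len_U, len_D] at hl
        right
        refine ⟨lensum e / 2, by omega, (e, a), ⟨⟨he, hhe, ?_⟩, ⟨ha, ?_⟩⟩, rfl⟩ <;> dsimp only <;> omega
      · rw [Ok_cons_D] at ho; omega
      · rw [Ok_cons_H] at ho
        left
        exact ⟨t, ⟨ho.2.2, by simp at hl; omega⟩, rfl⟩
  · rintro (⟨t, ⟨ho, hl⟩, rfl⟩ | ⟨j, hj, ⟨e, a⟩, ⟨⟨he, hhe, hel⟩, ⟨ha, hal⟩⟩, rfl⟩)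
    · exact ⟨⟨le_rfl, by norm_num, ho⟩, by simp; omega⟩
    · dsimp only at hel hal
      refine ⟨⟨?_, compOkW e 1 a le_rfl he ha⟩, ?_⟩
      · cases e with
        | nil => simp
        | cons x t' => simpa using hhe
      · simp only [glue, lensum_cons, lensum_append, lensum_cons, len_U, len_D]
        omega

lemma WF_succ_set (n : ℕ) : WF (n+1) = (WF n).image (SStep.H :: ·) ∪ WSF (n+1) := by
  ext L
  simp only [Finset.mem_union, Finset.mem_image, mem_WF, mem_WSF]
  constructor
  · rintro ⟨hw, hl⟩
    cases L with
    | nil => simp at hl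
    | cons s t =>
      cases s
      · right; exact ⟨hw, by simp, hl⟩
      · rw [Wp_cons_D] at hw; omega
      · rw [Wp_cons_H] at hw
        left
        exact ⟨t, ⟨hw.2, by simp at hl; omega⟩, rfl⟩
  · rintro (⟨t, ⟨hw, hl⟩, rfl⟩ | ⟨hw, _, hl⟩)
    · exact ⟨⟨rfl, hw⟩, by simp; omega⟩
    · exact ⟨hw, hl⟩

-- card recurrences
lemma DF_succ_card (n : ℕ) :
    (DF (n+1)).card = ∑ j ∈ Finset.range (n+1), (DF j).card * (DF (n-j)).card := by
  rw [DF_succ_set]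
  exact card_conv DF DF n (fun j L hL => (mem_DF.1 hL).2)
    (fun j₁ j₂ c₁ c₂ a₁ a₂ h1 h2 he => injDy (mem_DF.1 h1).1 (mem_DF.1 h2).1 he)

lemma WSF_succ_card (n : ℕ) :
    (WSF (n+1)).card = ∑ j ∈ Finset.range (n+1), (DF j).card * (WF (n-j)).card := by
  rw [WSF_succ_set]
  exact card_conv DF WF n (fun j L hL => (mem_DF.1 hL).2)
    (fun j₁ j₂ c₁ c₂ a₁ a₂ h1 h2 he => injDy (mem_DF.1 h1).1 (mem_DF.1 h2).1 he)

lemma cons_injective (s : SStep) : Function.Injective (s :: · : List SStep → List SStep) := by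
  intro a b h; simpa using h

lemma WF_succ_card (n : ℕ) : (WF (n+1)).card = (WF n).card + (WSF (n+1)).card := by
  rw [WF_succ_set, Finset.card_union_of_disjoint, Finset.card_image_of_injective _ (cons_injective _)]
  simp only [Finset.disjoint_left, Finset.mem_image]
  rintro L ⟨t, _, rfl⟩ hR
  exact (mem_WSF.1 hR).2.1 rfl

lemma AF_succ_card (n : ℕ) : (AF (n+1)).card =
    (AF n).card + ∑ j ∈ Finset.range (n+1), (WSF j).card * (AF (n-j)).card := by
  rw [AF_succ_set, Finset.card_union_of_disjoint, Finset.card_image_of_injective _ (cons_injective _)]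
  · congr 1
    exact card_conv WSF AF n (fun j L hL => (mem_WSF.1 hL).2.2)
      (fun j₁ j₂ c₁ c₂ a₁ a₂ h1 h2 he => injWp (mem_WSF.1 h1).1 (mem_WSF.1 h2).1 he)
  · simp only [Finset.disjoint_left, Finset.mem_image, Finset.mem_biUnion]
    rintro L ⟨t, _, rfl⟩ ⟨j, _, ⟨p1, p2⟩, _, hp⟩
    simp only [glue] at hp
    exact absurd hp (by simp)

noncomputable def Cps : PowerSeries ℚ := PowerSeries.mk fun n => (catalan n : ℚ)
noncomputable def Bps : PowerSeries ℚ := PowerSeries.mk fun n => (Nat.centralBinom n : ℚ)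

lemma SIlem (m : ℕ) : (catalan m : ℚ) =
    2 * (Nat.centralBinom m : ℚ) - (Nat.centralBinom (m+1) : ℚ) / 2 := by
  have h1 : ((m : ℚ) + 1) * (catalan m : ℚ) = (Nat.centralBinom m : ℚ) := by
    exact_mod_cast congrArg (Nat.cast : ℕ → ℚ) (succ_mul_catalan_eq_centralBinom m)
  have h2 : ((m : ℚ) + 1) * (Nat.centralBinom (m+1) : ℚ)
      = 2 * (2 * (m : ℚ) + 1) * (Nat.centralBinom m : ℚ) := by
    exact_mod_cast congrArg (Nat.cast : ℕ → ℚ) (Nat.succ_mul_centralBinom_succ m)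
  have hm : ((m : ℚ) + 1) ≠ 0 := by positivity
  apply mul_left_cancel₀ hm
  ring_nf
  ring_nf at h1 h2
  linarith

lemma coeff_CB (k : ℕ) : (PowerSeries.coeff k) (Cps * Bps)
    = ∑ i ∈ Finset.range (k+1), (catalan i : ℚ) * (Nat.centralBinom (k-i) : ℚ) := by
  rw [PowerSeries.coeff_mul, Finset.Nat.sum_antidiagonal_eq_sum_range_succ_mk]
  simp [Cps, Bps]

lemma coeff_CC (k : ℕ) : (PowerSeries.coeff k) (Cps * Cps) = (catalan (k+1) : ℚ) := by
  rw [PowerSeries.coeff_mul, catalan_succ']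
  push_cast
  simp [Cps]

lemma Tlem : ∀ k : ℕ, ∑ j ∈ Finset.range (k+1),
    (catalan j : ℚ) * (Nat.centralBinom (k-j) : ℚ) = (Nat.centralBinom (k+1) : ℚ) / 2 := by
  intro k
  induction k using Nat.strong_induction_on with
  | _ k ih =>
    rcases k with _ | m
    · rw [show Nat.centralBinom 1 = 2 from rfl]
      simp
    · show ∑ j ∈ Finset.range (m+2), (catalan j : ℚ) * (Nat.centralBinom (m+1-j) : ℚ)
        = (Nat.centralBinom (m+2) : ℚ) / 2
      have e1 : ∑ j ∈ Finset.range (m+2), (catalan j : ℚ) * (Nat.centralBinom (m+1-j) : ℚ)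
          = (∑ i ∈ Finset.range (m+1), (catalan (i+1) : ℚ) * (Nat.centralBinom (m-i) : ℚ))
            + (Nat.centralBinom (m+1) : ℚ) := by
        rw [Finset.sum_range_succ']
        simp
      have e2 : ∑ i ∈ Finset.range (m+1), (catalan (i+1) : ℚ) * (Nat.centralBinom (m-i) : ℚ)
          = (PowerSeries.coeff m) (Cps * Cps * Bps) := by
        rw [PowerSeries.coeff_mul, Finset.Nat.sum_antidiagonal_eq_sum_range_succ_mk]
        exact Finset.sum_congr rfl fun i hi => by rw [coeff_CC]; simp [Bps]
      have e3 : (PowerSeries.coeff m) (Cps * (Cps * Bps))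
          = ∑ i ∈ Finset.range (m+1), (catalan i : ℚ) * ((Nat.centralBinom (m-i+1) : ℚ) / 2) := by
        rw [PowerSeries.coeff_mul, Finset.Nat.sum_antidiagonal_eq_sum_range_succ_mk]
        refine Finset.sum_congr rfl fun i hi => ?_
        rw [Finset.mem_range] at hi
        rw [coeff_CB, ih (m-i) (by omega)]
        simp [Cps]
      have e4 : ((∑ j ∈ Finset.range (m+2), (catalan j : ℚ) * (Nat.centralBinom (m+1-j) : ℚ))
              - (catalan (m+1) : ℚ)) / 2
          = ∑ i ∈ Finset.range (m+1), (catalan i : ℚ) * ((Nat.centralBinom (m-i+1) : ℚ) / 2) := by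
        rw [Finset.sum_range_succ
          (f := fun j => (catalan j : ℚ) * (Nat.centralBinom (m+1-j) : ℚ)),
          Nat.sub_self, Nat.centralBinom_zero, Nat.cast_one, mul_one,
          add_sub_cancel_right, Finset.sum_div]
        refine Finset.sum_congr rfl fun i hi => ?_
        rw [Finset.mem_range] at hi
        rw [(show m + 1 - i = m - i + 1 by omega)]
        ring
      have massoc : (PowerSeries.coeff m) (Cps * Cps * Bps)
          = (PowerSeries.coeff m) (Cps * (Cps * Bps)) := by rw [mul_assoc]
      have si := SIlem (m+1)
      linarith [e1, e2, e3, e4, massoc, si]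

lemma catalan_conv (n : ℕ) :
    catalan (n+1) = ∑ i ∈ Finset.range (n+1), catalan i * catalan (n-i) := by
  rw [catalan_succ]
  exact Fin.sum_univ_eq_sum_range (fun i => catalan i * catalan (n-i)) (n+1)

lemma catalan_shift (n : ℕ) :
    catalan (n+2) = catalan (n+1) + ∑ j ∈ Finset.range (n+1), catalan j * catalan (n-j+1) := by
  rw [catalan_conv (n+1), Finset.sum_range_succ, Nat.sub_self, catalan_zero, mul_one, add_comm]
  congr 1
  refine Finset.sum_congr rfl fun j hj => ?_
  rw [Finset.mem_range] at hj
  rw [(show n + 1 - j = n - j + 1 by omega)]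

noncomputable def Aq (k : ℕ) : ℚ :=
  (1 + ∑ i ∈ Finset.range (k+1), (Nat.centralBinom i : ℚ)) / 2

lemma Aq_zero : Aq 0 = 1 := by
  simp [Aq, Nat.centralBinom_zero]

lemma Aq_succ (k : ℕ) : Aq (k+1) = Aq k + (Nat.centralBinom (k+1) : ℚ) / 2 := by
  simp only [Aq, Finset.sum_range_succ]
  ring

lemma Slem : ∀ m : ℕ, ∑ j ∈ Finset.range (m+1), (catalan j : ℚ) * Aq (m-j)
    = ∑ i ∈ Finset.range (m+1), (Nat.centralBinom i : ℚ) := by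
  intro m
  induction m with
  | zero => simp [Aq_zero, Nat.centralBinom_zero]
  | succ m ih =>
    rw [Finset.sum_range_succ (f := fun j => (catalan j : ℚ) * Aq (m+1-j)), Nat.sub_self]
    have h1 : ∑ j ∈ Finset.range (m+1), (catalan j : ℚ) * Aq (m+1-j)
        = ∑ j ∈ Finset.range (m+1), ((catalan j : ℚ) * Aq (m-j)
            + (catalan j : ℚ) * ((Nat.centralBinom (m+1-j) : ℚ) / 2)) := by
      refine Finset.sum_congr rfl fun j hj => ?_
      rw [Finset.mem_range] at hj
      rw [(show m+1-j = (m-j)+1 by omega), Aq_succ, (show m-j+1 = m+1-j by omega)]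
      ring
    rw [h1, Finset.sum_add_distrib, ih]
    have h2 : ∑ j ∈ Finset.range (m+1), (catalan j : ℚ) * ((Nat.centralBinom (m+1-j) : ℚ) / 2)
        = ((Nat.centralBinom (m+2) : ℚ) / 2 - (catalan (m+1) : ℚ)) / 2 := by
      have t := Tlem (m+1)
      rw [Finset.sum_range_succ, Nat.sub_self, Nat.centralBinom_zero, Nat.cast_one, mul_one] at t
      have h3 : ∑ j ∈ Finset.range (m+1), (catalan j : ℚ) * ((Nat.centralBinom (m+1-j) : ℚ) / 2)
          = (∑ j ∈ Finset.range (m+1), (catalan j : ℚ) * (Nat.centralBinom (m+1-j) : ℚ)) / 2 := by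
        rw [Finset.sum_div]
        exact Finset.sum_congr rfl fun j _ => by ring
      rw [h3]
      rw [show (m+1+1) = m+2 from rfl] at t
      linarith
    rw [h2, Aq_zero]
    conv_rhs => rw [Finset.sum_range_succ]
    have si := SIlem (m+1)
    have : (m+1+1) = m+2 := rfl
    rw [this] at si
    linarith

lemma DF_card : ∀ n : ℕ, (DF n).card = catalan n := by
  intro n
  induction n using Nat.strong_induction_on with
  | _ n ih =>
    rcases n with _ | m
    · rw [DF_zero]; simp
    · rw [DF_succ_card, catalan_conv m]
      refine Finset.sum_congr rfl fun j hj => ?_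
      rw [Finset.mem_range] at hj
      rw [ih j (by omega), ih (m-j) (by omega)]

lemma WF_card : ∀ n : ℕ, (WF n).card = catalan (n+1) := by
  intro n
  induction n using Nat.strong_induction_on with
  | _ n ih =>
    rcases n with _ | m
    · rw [WF_zero]; simp
    · rw [WF_succ_card, WSF_succ_card, catalan_shift m, ih m (by omega)]
      congr 1
      refine Finset.sum_congr rfl fun j hj => ?_
      rw [Finset.mem_range] at hj
      rw [DF_card j, ih (m-j) (by omega)]

lemma WSF_card_zero : (WSF 0).card = 1 := by rw [WSF_zero]; simp

lemma WSF_card_succ (n : ℕ) :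
    catalan (n+1) + (WSF (n+1)).card = catalan (n+2) := by
  rw [WSF_succ_card, catalan_shift n]
  congr 1
  refine Finset.sum_congr rfl fun j hj => ?_
  rw [Finset.mem_range] at hj
  rw [DF_card j, WF_card (n-j)]

lemma AF_card : ∀ n : ℕ, ((AF n).card : ℚ) = Aq n := by
  intro n
  induction n using Nat.strong_induction_on with
  | _ n ih =>
    rcases n with _ | n
    · rw [AF_zero, Aq_zero]; simp
    · have hrec := AF_succ_card n
      have hq : ((AF (n+1)).card : ℚ) = ((AF n).card : ℚ)
          + ∑ j ∈ Finset.range (n+1), ((WSF j).card : ℚ) * ((AF (n-j)).card : ℚ) := by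
        rw [hrec]; push_cast; ring
      rw [hq, ih n (by omega)]
      -- peel j = 0
      rw [Finset.sum_range_succ'
        (f := fun j => ((WSF j).card : ℚ) * ((AF (n-j)).card : ℚ))]
      simp only [Nat.sub_zero, WSF_card_zero, Nat.cast_one, one_mul]
      rw [ih n (by omega)]
      have hws : ∀ j : ℕ, ((WSF (j+1)).card : ℚ) = (catalan (j+2) : ℚ) - (catalan (j+1) : ℚ) := by
        intro j
        have := WSF_card_succ j
        have : ((catalan (j+1) : ℚ)) + ((WSF (j+1)).card : ℚ) = (catalan (j+2) : ℚ) := by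
          exact_mod_cast congrArg (Nat.cast : ℕ → ℚ) this
        linarith
      have hmid : ∑ j ∈ Finset.range n, ((WSF (j+1)).card : ℚ) * ((AF (n-(j+1))).card : ℚ)
          = ∑ j ∈ Finset.range n, ((catalan (j+2) : ℚ) - (catalan (j+1) : ℚ)) * Aq (n-(j+1)) := by
        refine Finset.sum_congr rfl fun j hj => ?_
        rw [Finset.mem_range] at hj
        rw [hws j, ih (n-(j+1)) (by omega)]
      rw [hmid]
      -- telescoping via Slem
      have hs1 := Slem (n+1)
      have hs0 := Slem n
      have peel1 : ∑ j ∈ Finset.range (n+2), (catalan j : ℚ) * Aq (n+1-j)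
          = (∑ j ∈ Finset.range n, (catalan (j+2) : ℚ) * Aq (n-(j+1)))
            + (catalan 1 : ℚ) * Aq n + (catalan 0 : ℚ) * Aq (n+1) := by
        rw [Finset.sum_range_succ' (f := fun j => (catalan j : ℚ) * Aq (n+1-j))]
        rw [Finset.sum_range_succ' (f := fun j => (catalan (j+1) : ℚ) * Aq (n+1-(j+1)))]
        simp only [Nat.sub_zero]
        congr 2
        refine Finset.sum_congr rfl fun j hj => ?_
        rw [Finset.mem_range] at hj
        rw [(show n+1-(j+1+1) = n-(j+1) by omega)]
      have peel0 : ∑ j ∈ Finset.range (n+1), (catalan j : ℚ) * Aq (n-j)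
          = (∑ j ∈ Finset.range n, (catalan (j+1) : ℚ) * Aq (n-(j+1)))
            + (catalan 0 : ℚ) * Aq n := by
        rw [Finset.sum_range_succ' (f := fun j => (catalan j : ℚ) * Aq (n-j))]
        simp only [Nat.sub_zero]
      have hsplit : ∑ j ∈ Finset.range n, ((catalan (j+2) : ℚ) - (catalan (j+1) : ℚ)) * Aq (n-(j+1))
          = (∑ j ∈ Finset.range n, (catalan (j+2) : ℚ) * Aq (n-(j+1)))
            - (∑ j ∈ Finset.range n, (catalan (j+1) : ℚ) * Aq (n-(j+1))) := by
        rw [← Finset.sum_sub_distrib]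
        exact Finset.sum_congr rfl fun j _ => by ring
      have hB : ∑ i ∈ Finset.range (n+2), (Nat.centralBinom i : ℚ)
          = (∑ i ∈ Finset.range (n+1), (Nat.centralBinom i : ℚ)) + (Nat.centralBinom (n+1) : ℚ) := by
        rw [Finset.sum_range_succ]
      rw [hsplit]
      have haq := Aq_succ n
      simp only [catalan_zero, catalan_one, Nat.cast_one, one_mul] at peel1 peel0
      rw [show (n+1+1) = n+2 from rfl] at hs1
      linarith

lemma sHeight_zero (L : List SStep) : sHeight L 0 = 0 := by simp [sHeight]
lemma sHeight_cons (s : SStep) (l : List SStep) (i : ℕ) :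
    sHeight (s::l) (i+1) = s.eff + sHeight l i := by simp [sHeight]

lemma okIff : ∀ (L : List SStep) (h : ℤ), 0 ≤ h →
    (Ok h L ↔ (h + (L.map SStep.eff).sum = 0 ∧ (∀ i, 0 ≤ h + sHeight L i) ∧
      (∀ i, ¬(L[i]? = some SStep.U ∧ L[i+1]? = some SStep.H)) ∧
      (∀ i, L[i]? = some SStep.H → h + sHeight L i ≤ 1))) := by
  intro L
  induction L with
  | nil =>
    intro h h0
    rw [Ok_nil]
    constructor
    · rintro rfl
      refine ⟨by simp, fun i => by simp [sHeight], fun i => by simp, fun i hi => by simp at hi⟩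
    · rintro ⟨h1, _⟩; simpa using h1
  | cons s l ih =>
    intro h h0
    have hnn : (∀ i, 0 ≤ h + sHeight (s::l) i) ↔
        (0 ≤ h ∧ ∀ i, 0 ≤ (h + s.eff) + sHeight l i) := by
      constructor
      · intro H
        refine ⟨by simpa [sHeight_zero] using H 0, fun i => ?_⟩
        have := H (i+1); rw [sHeight_cons] at this; linarith
      · rintro ⟨h0', H⟩ i
        cases i with
        | zero => simpa [sHeight_zero] using h0'
        | succ i => rw [sHeight_cons]; have := H i; linarith
    have hUH : (∀ i, ¬((s::l)[i]? = some SStep.U ∧ (s::l)[i+1]? = some SStep.H)) ↔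
        (¬(s = SStep.U ∧ l[0]? = some SStep.H) ∧
          ∀ i, ¬(l[i]? = some SStep.U ∧ l[i+1]? = some SStep.H)) := by
      constructor
      · intro H
        refine ⟨fun ⟨ha, hb⟩ => H 0 ⟨by simp [ha], by simpa using hb⟩,
          fun i ⟨ha, hb⟩ => H (i+1) ⟨by simpa using ha, by simpa using hb⟩⟩
      · rintro ⟨H0, H⟩ i
        cases i with
        | zero => rintro ⟨ha, hb⟩; simp at ha hb; exact H0 ⟨ha, hb⟩
        | succ i => rintro ⟨ha, hb⟩; simp at ha hb; exact H i ⟨ha, hb⟩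
    have hHc : (∀ i, (s::l)[i]? = some SStep.H → h + sHeight (s::l) i ≤ 1) ↔
        ((s = SStep.H → h ≤ 1) ∧
          ∀ i, l[i]? = some SStep.H → (h + s.eff) + sHeight l i ≤ 1) := by
      constructor
      · intro H
        refine ⟨fun hs => ?_, fun i hi => ?_⟩
        · have := H 0 (by simp [hs]); simpa [sHeight_zero] using this
        · have := H (i+1) (by simpa using hi); rw [sHeight_cons] at this; linarith
      · rintro ⟨H0, H⟩ i hi
        cases i with
        | zero =>
          simp at hi
          rw [sHeight_zero]
          simpa using H0 hi
        | succ i =>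
          simp at hi
          rw [sHeight_cons]
          have := H i hi
          linarith
    have heff : ((s::l).map SStep.eff).sum = s.eff + (l.map SStep.eff).sum := by simp
    rw [heff, hnn, hUH, hHc]
    cases s
    · rw [Ok_cons_U, ih (h+1) (by omega)]
      constructor
      · rintro ⟨hhd, h1, h2, h3, h4⟩
        rw [List.head?_eq_getElem?] at hhd
        refine ⟨(by rw [eff_U]; linarith), ⟨h0, fun i => (by rw [eff_U]; have := h2 i; linarith)⟩,
          ⟨fun ⟨_, hx⟩ => hhd hx, h3⟩,
          ⟨fun hs => (by cases hs), fun i hi => (by rw [eff_U]; have := h4 i hi; linarith)⟩⟩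
      · rintro ⟨h1, ⟨_, h2⟩, ⟨h3a, h3⟩, ⟨_, h4⟩⟩
        rw [eff_U] at h1
        refine ⟨?_, (by linarith), fun i => (by have := h2 i; rw [eff_U] at this; linarith), h3,
          fun i hi => (by have := h4 i hi; rw [eff_U] at this; linarith)⟩
        rw [List.head?_eq_getElem?]
        intro hx
        exact h3a ⟨rfl, hx⟩
    · rw [Ok_cons_D]
      constructor
      · rintro ⟨hge, hok⟩
        obtain ⟨h1, h2, h3, h4⟩ := (ih (h-1) (by omega)).1 hok
        refine ⟨(by rw [eff_D]; linarith), ⟨h0, fun i => (by rw [eff_D]; have := h2 i; linarith)⟩,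
          ⟨fun ⟨hs, _⟩ => (by cases hs), h3⟩,
          ⟨fun hs => (by cases hs), fun i hi => (by rw [eff_D]; have := h4 i hi; linarith)⟩⟩
      · rintro ⟨h1, ⟨_, h2⟩, ⟨_, h3⟩, ⟨_, h4⟩⟩
        rw [eff_D] at h1
        have hge : 1 ≤ h := by
          have := h2 0
          rw [sHeight_zero, eff_D] at this
          linarith
        refine ⟨hge, (ih (h-1) (by omega)).2
          ⟨(by linarith), fun i => (by have := h2 i; rw [eff_D] at this; linarith), h3,
            fun i hi => (by have := h4 i hi; rw [eff_D] at this; linarith)⟩⟩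
    · rw [Ok_cons_H]
      constructor
      · rintro ⟨_, hle, hok⟩
        obtain ⟨h1, h2, h3, h4⟩ := (ih h h0).1 hok
        refine ⟨(by rw [eff_H]; linarith), ⟨h0, fun i => (by rw [eff_H]; have := h2 i; linarith)⟩,
          ⟨fun ⟨hs, _⟩ => (by cases hs), h3⟩,
          ⟨fun _ => hle, fun i hi => (by rw [eff_H]; have := h4 i hi; linarith)⟩⟩
      · rintro ⟨h1, ⟨_, h2⟩, ⟨_, h3⟩, ⟨hH, h4⟩⟩
        rw [eff_H] at h1
        refine ⟨h0, hH rfl, (ih h h0).2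
          ⟨(by linarith), fun i => (by have := h2 i; rw [eff_H] at this; linarith), h3,
            fun i hi => (by have := h4 i hi; rw [eff_H] at this; linarith)⟩⟩

/-- For every integer `n ≥ 0`, the number of UH-free Schröder paths of length `2n` having
no horizontal step of height greater than `1` equals `(1/2) * (1 + ∑_{i=0}^{n} C(2i, i))`. -/
theorem stmt8 (n : ℕ) :
    (Nat.card {L : List SStep // IsSchroder L n ∧ UHFree L ∧
        ∀ i, L[i]? = some SStep.H → sHeight L i ≤ 1} : ℚ) =
    (1 + ∑ i ∈ Finset.range (n + 1), ((2 * i).choose i : ℚ)) / 2 := by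
  have hequiv : ∀ L : List SStep,
      (IsSchroder L n ∧ UHFree L ∧ ∀ i, L[i]? = some SStep.H → sHeight L i ≤ 1) ↔
        L ∈ AF n := by
    intro L
    rw [mem_AF]
    constructor
    · rintro ⟨⟨hlen, heff, hnn⟩, huh, hh⟩
      refine ⟨(okIff L 0 le_rfl).2
        ⟨(by rw [zero_add]; exact heff), fun i => (by rw [zero_add]; exact hnn i), huh,
          fun i hi => (by rw [zero_add]; exact hh i hi)⟩, hlen⟩
    · rintro ⟨hok, hlen⟩
      obtain ⟨h1, h2, h3, h4⟩ := (okIff L 0 le_rfl).1 hok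
      exact ⟨⟨hlen, (by rwa [zero_add] at h1),
        fun i => (by have := h2 i; rwa [zero_add] at this)⟩, h3,
        fun i hi => (by have := h4 i hi; rwa [zero_add] at this)⟩
  have hcard : Nat.card {L : List SStep // IsSchroder L n ∧ UHFree L ∧
      ∀ i, L[i]? = some SStep.H → sHeight L i ≤ 1} = (AF n).card := by
    rw [Nat.card_congr (Equiv.subtypeEquivRight hequiv), Nat.card_eq_fintype_card,
      Fintype.card_coe]
  rw [hcard, AF_card n, Aq]
  congr 2
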